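/- arXiv:1704.01893 — 2 statements merged into one kernel-verified Lean document; each statement's English description precedes it below -/
import Mathlib

section
/- Let t ≥ 0, K, L ≥ t+1, and ε with max{K,L}(t+1) ≤ ε ≤ KL. The number N of K×L binary matrices of total weight ε in which every row and every column has weight at least t+1 satisfies N ≤ C(min{K,L}, t+1)^{max{K,L}} · C(K·L - max{K,L}(t+1), ε - max{K,L}(t+1)). -/
open Finset Matrix

/-- Pick a subset of `r` of size `t+1` if possible, otherwise some subset of `univ`. -/
noncomputable def stallPick {L : ℕ} (t : ℕ) (hL : t + 1 ≤ L) (r : Finset (Fin L)) :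
    Finset (Fin L) :=
  if h : t + 1 ≤ r.card then (Finset.exists_subset_card_eq h).choose
  else (Finset.exists_subset_card_eq
    (show t + 1 ≤ (Finset.univ : Finset (Fin L)).card by simpa using hL)).choose

lemma stallPick_card {L : ℕ} (t : ℕ) (hL : t + 1 ≤ L) (r : Finset (Fin L)) :
    (stallPick t hL r).card = t + 1 := by
  unfold stallPick
  split_ifs with h
  · exact (Finset.exists_subset_card_eq h).choose_spec.2
  · exact (Finset.exists_subset_card_eq
      (show t + 1 ≤ (Finset.univ : Finset (Fin L)).card by simpa using hL)).choose_spec.2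

lemma stallPick_subset {L : ℕ} (t : ℕ) (hL : t + 1 ≤ L) (r : Finset (Fin L))
    (h : t + 1 ≤ r.card) : stallPick t hL r ⊆ r := by
  unfold stallPick
  rw [dif_pos h]
  exact (Finset.exists_subset_card_eq h).choose_spec.1

/-- The graph of a family of column sets. -/
def stallGraph {K L : ℕ} (S : Fin K → Finset (Fin L)) : Finset (Fin K × Fin L) :=
  Finset.univ.filter (fun p => p.2 ∈ S p.1)

lemma mem_stallGraph {K L : ℕ} (S : Fin K → Finset (Fin L)) (p : Fin K × Fin L) :
    p ∈ stallGraph S ↔ p.2 ∈ S p.1 := by simp [stallGraph]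

lemma stallGraph_card {K L : ℕ} (S : Fin K → Finset (Fin L))
    (h : ∀ i, (S i).card = t + 1) : (stallGraph S).card = K * (t + 1) := by
  have : stallGraph S
      = (Finset.univ.sigma (fun i => S i)).map
          (Equiv.sigmaEquivProd (Fin K) (Fin L)).toEmbedding := by
    ext ⟨i, j⟩
    simp [mem_stallGraph, Finset.mem_map_equiv]
  rw [this, Finset.card_map, Finset.card_sigma]
  simp [h, mul_comm]

/-- Counting bound using only the row condition. -/
lemma stall_aux (t K L ε : ℕ) (hL : t + 1 ≤ L) (hlo : K * (t + 1) ≤ ε) :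
    (Finset.univ.filter fun E : Matrix (Fin K) (Fin L) (ZMod 2) =>
        (Finset.univ.filter fun p : Fin K × Fin L => E p.1 p.2 = 1).card = ε ∧
        (∀ i : Fin K, t + 1 ≤ (Finset.univ.filter fun j : Fin L => E i j = 1).card)).card
      ≤ Nat.choose L (t + 1) ^ K *
          Nat.choose (K * L - K * (t + 1)) (ε - K * (t + 1)) := by
  classical
  set m := ε - K * (t + 1) with hm
  -- the support of a matrix
  set supp : Matrix (Fin K) (Fin L) (ZMod 2) → Finset (Fin K × Fin L) :=
    fun E => Finset.univ.filter (fun p => E p.1 p.2 = 1) with hsupp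
  -- selection of t+1 ones per row
  set pick : Matrix (Fin K) (Fin L) (ZMod 2) → Fin K → Finset (Fin L) :=
    fun E i => stallPick t hL (Finset.univ.filter fun j : Fin L => E i j = 1) with hpick
  -- target finset
  set T : Finset ((_ : Fin K → {s : Finset (Fin L) // s.card = t + 1}) ×
      Finset (Fin K × Fin L)) :=
    Finset.univ.sigma (fun S =>
      Finset.powersetCard m (stallGraph (fun i => (S i).1))ᶜ) with hT
  have hTcard : T.card = Nat.choose L (t + 1) ^ K *
      Nat.choose (K * L - K * (t + 1)) m := by
    rw [hT, Finset.card_sigma]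
    have : ∀ S : Fin K → {s : Finset (Fin L) // s.card = t + 1},
        (Finset.powersetCard m (stallGraph (fun i => (S i).1))ᶜ).card
          = Nat.choose (K * L - K * (t + 1)) m := by
      intro S
      rw [Finset.card_powersetCard, Finset.card_compl,
        stallGraph_card _ (fun i => (S i).2)]
      simp
    rw [Finset.sum_congr rfl (fun S _ => this S), Finset.sum_const, Finset.card_univ]
    rw [Fintype.card_fun, Fintype.card_finset_len]
    simp [smul_eq_mul, mul_comm]
  rw [← hTcard]
  -- the injection
  apply Finset.card_le_card_of_injOn
    (fun E => ⟨fun i => ⟨pick E i, stallPick_card t hL _⟩,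
      supp E \ stallGraph (pick E)⟩)
  · intro E hE
    simp only [Finset.mem_coe, Finset.mem_filter, Finset.mem_univ, true_and] at hE
    obtain ⟨hcard, hrow⟩ := hE
    have hsub : stallGraph (pick E) ⊆ supp E := by
      intro p hp
      rw [mem_stallGraph] at hp
      have := stallPick_subset t hL _ (hrow p.1) hp
      simp only [Finset.mem_filter, Finset.mem_univ, true_and] at this ⊢
      simpa [hsupp] using this
    have hgc : (stallGraph (pick E)).card = K * (t + 1) :=
      stallGraph_card _ (fun i => stallPick_card t hL _)
    rw [Finset.mem_coe, hT, Finset.mem_sigma]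
    refine ⟨Finset.mem_univ _, ?_⟩
    rw [Finset.mem_powersetCard]
    constructor
    · intro p hp
      rw [Finset.mem_compl]
      exact (Finset.mem_sdiff.mp hp).2
    · rw [Finset.card_sdiff_of_subset hsub, hgc]
      simp only [hsupp]
      rw [hcard, hm]
  · intro E hE E' hE' hf
    simp only [Finset.coe_filter, Set.mem_setOf_eq, Finset.mem_univ, true_and] at hE hE'
    have h1 : (fun i => (⟨pick E i, stallPick_card t hL _⟩ :
        {s : Finset (Fin L) // s.card = t + 1})) = fun i => ⟨pick E' i, stallPick_card t hL _⟩ := by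
      exact congrArg Sigma.fst hf
    have hpq : pick E = pick E' := by
      funext i
      exact congrArg Subtype.val (congrFun h1 i)
    have h2 : supp E \ stallGraph (pick E) = supp E' \ stallGraph (pick E') :=
      eq_of_heq (Sigma.mk.inj_iff.mp hf).2
    have hsub : stallGraph (pick E) ⊆ supp E := by
      intro p hp
      rw [mem_stallGraph] at hp
      have := stallPick_subset t hL _ (hE.2 p.1) hp
      simp only [Finset.mem_filter, Finset.mem_univ, true_and] at this ⊢
      simpa [hsupp] using this
    have hsub' : stallGraph (pick E') ⊆ supp E' := by
      intro p hp
      rw [mem_stallGraph] at hp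
      have := stallPick_subset t hL _ (hE'.2 p.1) hp
      simp only [Finset.mem_filter, Finset.mem_univ, true_and] at this ⊢
      simpa [hsupp] using this
    have hse : supp E = supp E' := by
      rw [← Finset.sdiff_union_of_subset hsub, ← Finset.sdiff_union_of_subset hsub',
        h2, hpq]
    have key : ∀ i j, (E i j = 1 ↔ E' i j = 1) := by
      intro i j
      have := Finset.ext_iff.mp hse (i, j)
      simpa [hsupp] using this
    funext i j
    have h01 : ∀ x : ZMod 2, x = 0 ∨ x = 1 := by decide
    rcases h01 (E i j) with h | h <;> rcases h01 (E' i j) with h' | h'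
    · rw [h, h']
    · have := (key i j).mpr h'
      rw [h] at this
      exact absurd this (by decide)
    · have := (key i j).mp h
      rw [h'] at this
      exact absurd this (by decide)
    · rw [h, h']

/-- The number of `(K,L)` stall patterns of weight `ε` (binary `K×L` matrices of weight
`ε` with every row and column weight at least `t+1`) is at most
`C(min{K,L}, t+1)^{max{K,L}} · C(K·L - max{K,L}·(t+1), ε - max{K,L}·(t+1))`. -/
theorem stall_pattern_count_upper_bound (t K L ε : ℕ)
    (hK : t + 1 ≤ K) (hL : t + 1 ≤ L)
    (hlo : max K L * (t + 1) ≤ ε) (hhi : ε ≤ K * L) :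
    (Finset.univ.filter fun E : Matrix (Fin K) (Fin L) (ZMod 2) =>
        (Finset.univ.filter fun p : Fin K × Fin L => E p.1 p.2 = 1).card = ε ∧
        (∀ i : Fin K, t + 1 ≤ (Finset.univ.filter fun j : Fin L => E i j = 1).card) ∧
        (∀ j : Fin L, t + 1 ≤ (Finset.univ.filter fun i : Fin K => E i j = 1).card)).card
      ≤ Nat.choose (min K L) (t + 1) ^ max K L *
          Nat.choose (K * L - max K L * (t + 1)) (ε - max K L * (t + 1)) := by
  rcases le_total L K with hc | hc
  · rw [max_eq_left hc] at hlo ⊢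
    rw [min_eq_right hc]
    calc _ ≤ (Finset.univ.filter fun E : Matrix (Fin K) (Fin L) (ZMod 2) =>
        (Finset.univ.filter fun p : Fin K × Fin L => E p.1 p.2 = 1).card = ε ∧
        (∀ i : Fin K, t + 1 ≤ (Finset.univ.filter fun j : Fin L => E i j = 1).card)).card := by
          apply Finset.card_le_card
          intro E hE
          simp only [Finset.mem_filter] at hE ⊢
          exact ⟨hE.1, hE.2.1, hE.2.2.1⟩
      _ ≤ _ := stall_aux t K L ε hL hlo
  · rw [max_eq_right hc] at hlo ⊢
    rw [min_eq_left hc]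
    calc _ ≤ (Finset.univ.filter fun F : Matrix (Fin L) (Fin K) (ZMod 2) =>
        (Finset.univ.filter fun p : Fin L × Fin K => F p.1 p.2 = 1).card = ε ∧
        (∀ i : Fin L, t + 1 ≤ (Finset.univ.filter fun j : Fin K => F i j = 1).card)).card := by
          apply Finset.card_le_card_of_injOn (fun E => Eᵀ)
          · rintro E hE
            simp only [Finset.mem_coe, Finset.mem_filter, Finset.mem_univ, true_and] at hE ⊢
            obtain ⟨h1, -, h3⟩ := hE
            refine ⟨?_, fun i => h3 i⟩
            rw [← h1]
            exact Finset.card_equiv (Equiv.prodComm _ _) (by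
              intro p; rw [Finset.mem_filter, Finset.mem_filter]; simp [Matrix.transpose_apply])
          · intro E _ E' _ h
            have : Eᵀᵀ = E'ᵀᵀ := congrArg Matrix.transpose h
            simpa using this
      _ ≤ Nat.choose K (t + 1) ^ L *
            Nat.choose (L * K - L * (t + 1)) (ε - L * (t + 1)) :=
          stall_aux t L K ε hK hlo
      _ = _ := by rw [mul_comm L K]
end

section
/- Let d_min be the minimum distance of the binary component code C of a staircase code. Then any two distinct semi-infinite staircase codewords differ in at least d_min^2 positions, i.e., the minimum distance of the staircase code is at least d_min^2. -/
open Finset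

lemma staircase_card_filter_sum_type {α β : Type*} [Fintype α] [Fintype β]
    (P : α ⊕ β → Prop) [DecidablePred P] :
    (univ.filter P).card
      = (univ.filter fun a => P (Sum.inl a)).card
        + (univ.filter fun b => P (Sum.inr b)).card := by
  rw [← Finset.card_disjSum]
  congr 1
  ext x
  cases x <;> simp [Finset.mem_disjSum]

/-- Let `C` be a linear component code of length `2m` with minimum distance `dmin`
(every nonzero codeword has weight at least `dmin`). A semi-infinite staircase codeword
is a sequence of `m×m` blocks `B 0, B 1, …` with `B 0 = 0` such that for each `i ≥ 1`
every row of `[B_{i-1}ᵀ  B_i]` lies in `C`. Then any two distinct staircase codewords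
differ in at least `dmin^2` positions: the staircase code has minimum distance at least
`dmin^2`. -/
theorem staircase_min_distance (m dmin : ℕ)
    (C : Submodule (ZMod 2) ((Fin m ⊕ Fin m) → ZMod 2))
    (hd : ∀ c ∈ C, c ≠ 0 → dmin ≤ (Finset.univ.filter fun x => c x ≠ 0).card)
    (B B' : ℕ → Matrix (Fin m) (Fin m) (ZMod 2))
    (hB0 : B 0 = 0) (hB'0 : B' 0 = 0)
    (hB : ∀ i : ℕ, 1 ≤ i → ∀ r : Fin m,
      (Sum.elim (fun j => B (i - 1) j r) (fun j => B i r j)) ∈ C)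
    (hB' : ∀ i : ℕ, 1 ≤ i → ∀ r : Fin m,
      (Sum.elim (fun j => B' (i - 1) j r) (fun j => B' i r j)) ∈ C)
    (hne : B ≠ B') :
    ∃ S : Finset (ℕ × Fin m × Fin m),
      dmin ^ 2 ≤ S.card ∧
      ∀ p ∈ S, B p.1 p.2.1 p.2.2 ≠ B' p.1 p.2.1 p.2.2 := by
  classical
  have hex : ∃ i, B i ≠ B' i := by
    by_contra h
    push_neg at h
    exact hne (funext h)
  set i := Nat.find hex with hidef
  have hDi : B i ≠ B' i := Nat.find_spec hex
  have hmin : ∀ j < i, B j = B' j := by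
    intro j hj
    by_contra h
    exact Nat.find_min hex hj h
  have hi1 : 1 ≤ i := by
    rcases Nat.eq_zero_or_pos i with h | h
    · exact absurd (by rw [h, hB0, hB'0]) hDi
    · exact h
  have hprev : B (i - 1) = B' (i - 1) := hmin _ (Nat.sub_lt hi1 one_pos)
  -- weights
  set w : Fin m → ℕ := fun r => (univ.filter fun c => B i r c ≠ B' i r c).card with hw
  set u : Fin m → ℕ := fun c => (univ.filter fun r => B i r c ≠ B' i r c).card with hu
  set v : Fin m → ℕ :=
    fun c => (univ.filter fun j => B (i+1) c j ≠ B' (i+1) c j).card with hv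
  set R : Finset (Fin m) := univ.filter fun r => B i r ≠ B' i r with hR
  set Cols : Finset (Fin m) := univ.filter fun c => ∃ r, B i r c ≠ B' i r c with hCo
  -- each nonzero row of the difference at block i has weight ≥ dmin
  have hrow : ∀ r ∈ R, dmin ≤ w r := by
    intro r hr
    have hrne : B i r ≠ B' i r := by simpa [hR] using hr
    set cw : (Fin m ⊕ Fin m) → ZMod 2 :=
      (Sum.elim (fun j => B (i - 1) j r) (fun j => B i r j))
        - (Sum.elim (fun j => B' (i - 1) j r) (fun j => B' i r j)) with hcw
    have hcwC : cw ∈ C := sub_mem (hB i hi1 r) (hB' i hi1 r)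
    have hcwl : ∀ a, cw (Sum.inl a) = 0 := by
      intro a; simp [hcw, Pi.sub_apply, hprev]
    have hcwr : ∀ c, (cw (Sum.inr c) ≠ 0 ↔ B i r c ≠ B' i r c) := by
      intro c; simp [hcw, Pi.sub_apply, sub_ne_zero]
    have hcwne : cw ≠ 0 := by
      obtain ⟨c, hc⟩ := Function.ne_iff.mp hrne
      intro h0
      exact ((hcwr c).mpr hc) (by rw [h0]; rfl)
    have hwt := hd cw hcwC hcwne
    rw [staircase_card_filter_sum_type] at hwt
    have h1 : (univ.filter fun a => cw (Sum.inl a) ≠ 0) = ∅ := by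
      apply Finset.filter_false_of_mem
      intro a _
      simp [hcwl a]
    have h2 : (univ.filter fun c => cw (Sum.inr c) ≠ 0)
        = (univ.filter fun c => B i r c ≠ B' i r c) := by
      apply Finset.filter_congr
      intro c _
      simp [hcwr c]
    rw [h1, h2] at hwt
    simpa [hw] using hwt
  -- each column weight at block i is at most R.card
  have hucard : ∀ c, u c ≤ R.card := by
    intro c
    apply Finset.card_le_card
    intro r hr
    simp only [hu, mem_filter, mem_univ, true_and] at hr
    simp only [hR, mem_filter, mem_univ, true_and]
    exact fun h => hr (by rw [h])
  -- nonzero columns at block i force weight in block i+1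
  have hcol : ∀ c ∈ Cols, dmin ≤ u c + v c := by
    intro c hc
    have hcne : ∃ r, B i r c ≠ B' i r c := by simpa [hCo] using hc
    set cw : (Fin m ⊕ Fin m) → ZMod 2 :=
      (Sum.elim (fun j => B (i+1-1) j c) (fun j => B (i+1) c j))
        - (Sum.elim (fun j => B' (i+1-1) j c) (fun j => B' (i+1) c j)) with hcw
    have hcwC : cw ∈ C := sub_mem (hB (i+1) (by omega) c) (hB' (i+1) (by omega) c)
    have hi1' : i + 1 - 1 = i := by omega
    have hcwl : ∀ a, (cw (Sum.inl a) ≠ 0 ↔ B i a c ≠ B' i a c) := by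
      intro a; simp [hcw, Pi.sub_apply, hi1', sub_ne_zero]
    have hcwr : ∀ j, (cw (Sum.inr j) ≠ 0 ↔ B (i+1) c j ≠ B' (i+1) c j) := by
      intro j; simp [hcw, Pi.sub_apply, sub_ne_zero]
    have hcwne : cw ≠ 0 := by
      obtain ⟨r, hr⟩ := hcne
      intro h0
      exact ((hcwl r).mpr hr) (by rw [h0]; rfl)
    have hwt := hd cw hcwC hcwne
    rw [staircase_card_filter_sum_type] at hwt
    have h1 : (univ.filter fun a => cw (Sum.inl a) ≠ 0)
        = (univ.filter fun r => B i r c ≠ B' i r c) := by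
      apply Finset.filter_congr
      intro a _
      simp [hcwl a]
    have h2 : (univ.filter fun j => cw (Sum.inr j) ≠ 0)
        = (univ.filter fun j => B (i+1) c j ≠ B' (i+1) c j) := by
      apply Finset.filter_congr
      intro j _
      simp [hcwr j]
    rw [h1, h2] at hwt
    simpa [hu, hv] using hwt
  -- Cols has at least dmin elements
  have hRne : R.Nonempty := by
    obtain ⟨r, hr⟩ := Function.ne_iff.mp hDi
    exact ⟨r, by simp [hR, hr]⟩
  obtain ⟨r₀, hr₀⟩ := hRne
  have hColsCard : dmin ≤ Cols.card := by
    refine le_trans (hrow r₀ hr₀) (Finset.card_le_card ?_)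
    intro c hc
    simp only [hw, mem_filter, mem_univ, true_and] at hc
    simp only [hCo, mem_filter, mem_univ, true_and]
    exact ⟨r₀, hc⟩
  -- build the set of differing positions
  set S₁ : Finset (ℕ × Fin m × Fin m) :=
    R.biUnion (fun r => (univ.filter fun c => B i r c ≠ B' i r c).image
      fun c => (i, r, c)) with hS₁
  set S₂ : Finset (ℕ × Fin m × Fin m) :=
    Cols.biUnion (fun c => (univ.filter fun j => B (i+1) c j ≠ B' (i+1) c j).image
      fun j => (i+1, c, j)) with hS₂
  have hS₁card : S₁.card = ∑ r ∈ R, w r := by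
    rw [hS₁, Finset.card_biUnion]
    · refine Finset.sum_congr rfl fun r _ => ?_
      rw [Finset.card_image_of_injective _ (fun a b h => by simpa using h)]
    · intro a _ b _ hab
      simp only [Finset.disjoint_left, Finset.mem_image, mem_filter]
      rintro p ⟨c, _, rfl⟩ ⟨c', _, h⟩
      apply hab
      have h21 := congrArg (fun q => q.2.1) h
      simpa using h21.symm
  have hS₂card : S₂.card = ∑ c ∈ Cols, v c := by
    rw [hS₂, Finset.card_biUnion]
    · refine Finset.sum_congr rfl fun c _ => ?_
      rw [Finset.card_image_of_injective _ (fun a b h => by simpa using h)]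
    · intro a _ b _ hab
      simp only [Finset.disjoint_left, Finset.mem_image, mem_filter]
      rintro p ⟨c, _, rfl⟩ ⟨c', _, h⟩
      apply hab
      have h21 := congrArg (fun q => q.2.1) h
      simpa using h21.symm
  have hS₁fst : ∀ p ∈ S₁, p.1 = i := by
    intro p hp
    simp only [hS₁, Finset.mem_biUnion, Finset.mem_image] at hp
    obtain ⟨r, _, c, _, rfl⟩ := hp
    rfl
  have hS₂fst : ∀ p ∈ S₂, p.1 = i + 1 := by
    intro p hp
    simp only [hS₂, Finset.mem_biUnion, Finset.mem_image] at hp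
    obtain ⟨r, _, c, _, rfl⟩ := hp
    rfl
  have hdisj : Disjoint S₁ S₂ := by
    rw [Finset.disjoint_left]
    intro p h1 h2
    have := hS₁fst p h1
    have := hS₂fst p h2
    omega
  refine ⟨S₁ ∪ S₂, ?_, ?_⟩
  · rw [Finset.card_union_of_disjoint hdisj, hS₁card, hS₂card]
    have hb1 : R.card * dmin ≤ ∑ r ∈ R, w r := by
      simpa using Finset.card_nsmul_le_sum R w dmin hrow
    have hb2 : Cols.card * (dmin - R.card) ≤ ∑ c ∈ Cols, v c := by
      refine le_trans ?_ (Finset.card_nsmul_le_sum Cols v (dmin - R.card) ?_)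
      · simp
      · intro c hc
        have := hcol c hc
        have := hucard c
        omega
    have hk1 : 1 ≤ R.card := Finset.card_pos.mpr ⟨r₀, hr₀⟩
    set k := R.card
    set K := Cols.card
    rcases le_or_gt dmin k with h | h
    · calc dmin ^ 2 = dmin * dmin := by ring
        _ ≤ k * dmin := Nat.mul_le_mul_right dmin h
        _ ≤ ∑ r ∈ R, w r := hb1
        _ ≤ ∑ r ∈ R, w r + ∑ c ∈ Cols, v c := Nat.le_add_right _ _
    · obtain ⟨t, ht⟩ : ∃ t, dmin = k + t := ⟨dmin - k, by omega⟩
      have htk : dmin - k = t := by omega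
      rw [htk] at hb2
      have hKt : (k + t) * t ≤ K * t := Nat.mul_le_mul_right t (ht ▸ hColsCard)
      calc dmin ^ 2 = k * dmin + (k + t) * t := by rw [ht]; ring
        _ ≤ k * dmin + K * t := by omega
        _ ≤ ∑ r ∈ R, w r + ∑ c ∈ Cols, v c := Nat.add_le_add hb1 hb2
  · intro p hp
    rcases Finset.mem_union.mp hp with h | h
    · simp only [hS₁, Finset.mem_biUnion, Finset.mem_image, mem_filter] at h
      obtain ⟨r, _, c, ⟨_, hc⟩, rfl⟩ := h
      exact hc
    · simp only [hS₂, Finset.mem_biUnion, Finset.mem_image, mem_filter] at h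
      obtain ⟨c, _, j, ⟨_, hj⟩, rfl⟩ := h
      exact hj
end
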